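/- For every α ∈ (0,1) and every ε > 0 there exist a constant c > 0 and m₀ ∈ ℕ such that for all m ≥ m₀ and every string e ∈ {0,1}^m the following holds. Let T be a uniformly random subset of {1,…,m} of size ⌊αm⌋ and, independently, let b ∈ {0,1}^m be uniformly random; set T' = {i ∈ T : b_i = 1}. For a subset S ⊆ {1,…,m}, write r(S) = (Σ_{i∈S} e_i)/|S| for the relative error on S (with r(∅) = 0). Then Pr[ r({1,…,m} \ T) > r(T') + ε ] ≤ 2^{−c·m}. -/

import Mathlib

open Finset

/-- The relative error of a bit string `e` on a subset `S`: the fraction of positions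
`i ∈ S` with `e i = 1` (equal to `0` for `S = ∅`, since `0 / 0 = 0` in `ℝ`). -/
noncomputable def relErr {m : ℕ} (e : Fin m → Bool) (S : Finset (Fin m)) : ℝ :=
  ((S.filter (fun i => e i = true)).card : ℝ) / (S.card : ℝ)


lemma analytic_core {c₁ q : ℝ} (hc0 : 0 < c₁) (hc : c₁ ≤ 1/2) (hq0 : 0 ≤ q) (hq1 : q ≤ 1) :
    (1 - c₁/2) ^ (c₁ - q) * (1 - q*(c₁/2)) ≤ Real.exp (-(c₁^2/6)) := by
  obtain ⟨x, hxdef⟩ : ∃ x:ℝ, x = 1 - c₁/2 := ⟨_, rfl⟩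
  rw [← hxdef]
  have hx0 : (0:ℝ) < x := by rw [hxdef]; nlinarith
  have hx34 : (3/4:ℝ) ≤ x := by rw [hxdef]; nlinarith
  have hlogx : Real.log x ≤ x - 1 := Real.log_le_sub_one_of_pos hx0
  have hlogx2 : -Real.log x ≤ 1/x - 1 := by
    have h := Real.log_le_sub_one_of_pos (x := x⁻¹) (by positivity)
    rw [Real.log_inv] at h
    rw [one_div]
    linarith
  have hinvle : 1/x ≤ 4/3 := by
    rw [div_le_iff₀ hx0]; linarith
  have h1 : (1 - q*(c₁/2)) ≤ Real.exp (-(q*(c₁/2))) := by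
    have := Real.add_one_le_exp (-(q*(c₁/2)))
    linarith
  have h2 : x ^ (c₁ - q) = Real.exp (Real.log x * (c₁ - q)) :=
    Real.rpow_def_of_pos hx0 _
  have e1 : c₁ * Real.log x ≤ -(c₁^2/2) := by
    have h := mul_le_mul_of_nonneg_left hlogx (le_of_lt hc0)
    have hx1 : c₁ * (x - 1) = -(c₁^2/2) := by rw [hxdef]; ring
    linarith
  have e2 : -(q * Real.log x) ≤ q * (1/x) - q := by
    have h := mul_le_mul_of_nonneg_left hlogx2 hq0
    nlinarith [h]
  have hquad : 1/x - 1 - c₁/2 ≤ c₁^2/3 := by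
    have hq : 1/x ≤ c₁^2/3 + 1 + c₁/2 := by
      rw [div_le_iff₀ hx0, hxdef]; nlinarith
    linarith
  have e6 : q * (1/x) - q - q*(c₁/2) ≤ q * (c₁^2/3) := by
    have h := mul_le_mul_of_nonneg_left hquad hq0
    nlinarith [h]
  have e7 : q * (c₁^2/3) ≤ c₁^2/3 := by nlinarith [sq_nonneg c₁]
  have hkey : Real.log x * (c₁ - q) - q*(c₁/2) ≤ -(c₁^2/6) := by nlinarith [e1, e2, e6, e7]
  calc x ^ (c₁ - q) * (1 - q*(c₁/2))
      ≤ Real.exp (Real.log x * (c₁ - q)) * Real.exp (-(q*(c₁/2))) := by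
        rw [h2]
        apply mul_le_mul_of_nonneg_left h1 (le_of_lt (Real.exp_pos _))
    _ = Real.exp (Real.log x * (c₁ - q) - q*(c₁/2)) := by rw [← Real.exp_add]; ring_nf
    _ ≤ Real.exp (-(c₁^2/6)) := Real.exp_le_exp.mpr hkey

lemma sum_powerset_prod {ι : Type*} [DecidableEq ι] (U : Finset ι) (g : ι → ℝ) :
    ∑ S ∈ U.powerset, ∏ i ∈ S, g i = ∏ i ∈ U, (1 + g i) := by
  rw [show (fun i => 1 + g i) = (fun i => g i + 1) from funext fun i => by ring]
  rw [Finset.prod_add]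
  simp

-- f increases up to s and decreases after s ⇒ f i ≤ f s
lemma le_peak (f : ℕ → ℝ) (s : ℕ) (hup : ∀ i, i < s → f i ≤ f (i+1))
    (hdown : ∀ i, s ≤ i → f (i+1) ≤ f i) : ∀ i, f i ≤ f s := by
  have up : ∀ j, ∀ i, i ≤ j → j ≤ s → f i ≤ f j := by
    intro j
    induction j with
    | zero => intro i hi _; interval_cases i; exact le_refl _
    | succ n ih =>
      intro i hi hj
      rcases Nat.eq_or_lt_of_le hi with h | h
      · exact h ▸ le_refl _
      · exact le_trans (ih i (Nat.lt_succ_iff.mp h) (by omega)) (hup n (by omega))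
  have down : ∀ j, s ≤ j → f j ≤ f s := by
    intro j
    induction j with
    | zero => intro h; have : s = 0 := by omega
              rw [this]
    | succ n ih =>
      intro h
      rcases Nat.eq_or_lt_of_le h with h' | h'
      · exact h' ▸ le_refl _
      · exact le_trans (hdown n (by omega)) (ih (by omega))
  intro i
  rcases le_or_gt i s with h | h
  · exact up s i h le_rfl
  · exact down i (le_of_lt h)


lemma choose_nat_up (n s i : ℕ) (hsn : s ≤ n) (hi : i < s) :
    n.choose i * (n - s) ≤ n.choose (i+1) * s := by
  have key : n.choose i * (n - s) * (i+1) ≤ n.choose (i+1) * s * (i+1) := by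
    calc n.choose i * (n - s) * (i+1) = n.choose i * ((n-s) * (i+1)) := by ring
      _ ≤ n.choose i * ((n-i) * s) := by
          apply Nat.mul_le_mul_left
          exact Nat.mul_le_mul (Nat.sub_le_sub_left (le_of_lt hi) n) hi
      _ = (n.choose i * (n-i)) * s := by ring
      _ = (n.choose (i+1) * (i+1)) * s := by rw [Nat.choose_succ_right_eq]
      _ = n.choose (i+1) * s * (i+1) := by ring
  exact Nat.le_of_mul_le_mul_right key (Nat.succ_pos i)

lemma choose_nat_down (n s i : ℕ) (hsn : s ≤ n) (hi : s ≤ i) :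
    n.choose (i+1) * s ≤ n.choose i * (n - s) := by
  have key : n.choose (i+1) * s * (i+1) ≤ n.choose i * (n - s) * (i+1) := by
    calc n.choose (i+1) * s * (i+1) = (n.choose (i+1) * (i+1)) * s := by ring
      _ = (n.choose i * (n-i)) * s := by rw [Nat.choose_succ_right_eq]
      _ = n.choose i * ((n-i) * s) := by ring
      _ ≤ n.choose i * ((n-s) * (i+1)) := by
          apply Nat.mul_le_mul_left
          exact Nat.mul_le_mul (Nat.sub_le_sub_left hi n) (Nat.le_succ_of_le hi)
      _ = n.choose i * (n - s) * (i+1) := by ring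
  exact Nat.le_of_mul_le_mul_right key (Nat.succ_pos i)

lemma binom_lower (n s : ℕ) (hsn : s < n) :
    (1 + (s:ℝ)/((n:ℝ)-s))^n ≤ ((n:ℝ)+1) * (n.choose s) * ((s:ℝ)/((n:ℝ)-s))^s := by
  have hns : (0:ℝ) < (n:ℝ) - s := by
    have : (s:ℝ) < n := by exact_mod_cast hsn
    linarith
  set y : ℝ := (s:ℝ)/((n:ℝ)-s) with hy
  have hy0 : 0 ≤ y := by positivity
  have hcast : ((n - s : ℕ) : ℝ) = (n:ℝ) - s := Nat.cast_sub (le_of_lt hsn)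
  set f : ℕ → ℝ := fun i => (n.choose i : ℝ) * y^i with hf
  have hup : ∀ i, i < s → f i ≤ f (i+1) := by
    intro i hi
    have hc : (n.choose i : ℝ) ≤ (n.choose (i+1)) * y := by
      rw [hy, mul_div_assoc', le_div_iff₀ hns, ← hcast]
      exact_mod_cast choose_nat_up n s i (le_of_lt hsn) hi
    simp only [hf]
    calc (n.choose i : ℝ) * y^i ≤ ((n.choose (i+1)) * y) * y^i :=
          mul_le_mul_of_nonneg_right hc (pow_nonneg hy0 i)
      _ = (n.choose (i+1) : ℝ) * y^(i+1) := by ring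
  have hdown : ∀ i, s ≤ i → f (i+1) ≤ f i := by
    intro i hi
    have hc : (n.choose (i+1) : ℝ) * y ≤ n.choose i := by
      rw [hy, mul_div_assoc', div_le_iff₀ hns, ← hcast]
      exact_mod_cast choose_nat_down n s i (le_of_lt hsn) hi
    simp only [hf]
    calc (n.choose (i+1) : ℝ) * y^(i+1) = ((n.choose (i+1)) * y) * y^i := by ring
      _ ≤ (n.choose i : ℝ) * y^i := mul_le_mul_of_nonneg_right hc (pow_nonneg hy0 i)
  have hpeak := le_peak f s hup hdown
  have hexp : (1 + y)^n = ∑ i ∈ range (n+1), f i := by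
    rw [show (1:ℝ) + y = y + 1 by ring, add_pow]
    apply Finset.sum_congr rfl
    intro i _
    simp [hf]; ring
  calc (1 + y)^n = ∑ i ∈ range (n+1), f i := hexp
    _ ≤ ∑ _i ∈ range (n+1), f s := Finset.sum_le_sum (fun i _ => hpeak i)
    _ = ((n:ℝ)+1) * f s := by
        rw [Finset.sum_const, Finset.card_range]
        push_cast
        ring
    _ = ((n:ℝ)+1) * (n.choose s) * y^s := by rw [hf]; ring


lemma sum_powerset_pow {ι : Type*} [DecidableEq ι] (U : Finset ι) (c : ℝ) :
    ∑ S ∈ U.powerset, c^S.card = (1 + c)^U.card := by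
  have h := sum_powerset_prod U (fun _ => c)
  simp only [Finset.prod_const] at h
  rw [h]

lemma small_tail {m : ℕ} (T : Finset (Fin m)) (k : ℕ) (hk : T.card = k) :
    ((T.powerset.filter (fun S => 4 * S.card ≤ k)).card : ℝ) ≤ (337/192)^k := by
  have key : ((T.powerset.filter (fun S => 4 * S.card ≤ k)).card : ℝ) * (3/4)^k
      ≤ (337/256)^k := by
    calc ((T.powerset.filter (fun S => 4 * S.card ≤ k)).card : ℝ) * (3/4)^k
        = ∑ _S ∈ T.powerset.filter (fun S => 4 * S.card ≤ k), (3/4:ℝ)^k := by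
          rw [Finset.sum_const]; ring
      _ ≤ ∑ S ∈ T.powerset.filter (fun S => 4 * S.card ≤ k), ((3/4:ℝ)^4)^S.card := by
          apply Finset.sum_le_sum
          intro S hS
          rw [Finset.mem_filter] at hS
          rw [← pow_mul]
          exact pow_le_pow_of_le_one (by norm_num) (by norm_num) hS.2
      _ ≤ ∑ S ∈ T.powerset, ((3/4:ℝ)^4)^S.card := by
          apply Finset.sum_le_sum_of_subset_of_nonneg (Finset.filter_subset _ _)
          intro S _ _; positivity
      _ = (1 + (3/4:ℝ)^4)^T.card := sum_powerset_pow T _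
      _ = (337/256)^k := by rw [hk]; norm_num
  have h2 : ((T.powerset.filter (fun S => 4 * S.card ≤ k)).card : ℝ)
      = ((T.powerset.filter (fun S => 4 * S.card ≤ k)).card : ℝ) * (3/4)^k * (4/3)^k := by
    rw [mul_assoc, ← mul_pow]; norm_num
  rw [h2]
  calc ((T.powerset.filter (fun S => 4 * S.card ≤ k)).card : ℝ) * (3/4)^k * (4/3)^k
      ≤ (337/256:ℝ)^k * (4/3)^k := mul_le_mul_of_nonneg_right key (by positivity)
    _ = (337/192)^k := by rw [← mul_pow]; norm_num




lemma hyper_tail {m : ℕ} (e : Fin m → Bool) (U : Finset (Fin m)) (s : ℕ)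
    (hs0 : 0 < s) (hsn : s < U.card)
    (c₁ : ℝ) (hc0 : 0 < c₁) (hc : c₁ ≤ 1/2)
    (P : Finset (Fin m) → Prop) [DecidablePred P]
    (hthr : ∀ S ∈ (U.powersetCard s).filter P,
      ((S.filter (fun i => e i = true)).card : ℝ)
        ≤ ((s:ℝ)/(U.card:ℝ) - c₁) * ((U.filter (fun i => e i = true)).card)) :
    (((U.powersetCard s).filter P).card : ℝ)
      ≤ ((U.card:ℝ)+1) * (U.card.choose s) *
        (Real.exp (-(c₁^2/6)))^((U.filter (fun i => e i = true)).card) := by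
  set n := U.card with hn
  set w := (U.filter (fun i => e i = true)).card with hw
  have hwn : w ≤ n := by rw [hw, hn]; exact Finset.card_filter_le _ _
  have hn0 : (0:ℝ) < n := by
    have : 0 < n := lt_of_le_of_lt (Nat.zero_le s) hsn
    exact_mod_cast this
  have hnsR : (0:ℝ) < (n:ℝ) - s := by
    have : (s:ℝ) < n := by exact_mod_cast hsn
    linarith
  set q : ℝ := (s:ℝ)/(n:ℝ) with hq
  have hq0 : 0 ≤ q := by positivity
  have hq1 : q ≤ 1 := by
    rw [hq, div_le_one hn0]
    exact_mod_cast le_of_lt hsn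
  set x : ℝ := 1 - c₁/2 with hx
  have hx0 : (0:ℝ) < x := by rw [hx]; linarith
  have hx1 : x ≤ 1 := by rw [hx]; linarith
  set y : ℝ := (s:ℝ)/((n:ℝ)-s) with hy
  have hy0 : (0:ℝ) < y := by
    apply div_pos _ hnsR
    exact_mod_cast hs0
  set A := ((U.powersetCard s).filter P) with hA
  have hsub : A ⊆ U.powerset := by
    intro S hS
    rw [Finset.mem_powerset]
    rw [hA, Finset.mem_filter, Finset.mem_powersetCard] at hS
    exact hS.1.1
  -- identity (1+y*x) = (1+y)*(1 - q*(c₁/2))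
  have hiden : 1 + y*x = (1+y)*(1 - q*(c₁/2)) := by
    have hqy : q * (1+y) = y := by
      rw [hq, hy]
      field_simp
      ring
    have hc2 : c₁/2 = 1 - x := by rw [hx]; ring
    linear_combination ((1+y)*q)*hc2 + (1-x)*hqy
  -- Step 1 : GF bound
  have step1 : (A.card : ℝ) * ((x^((q - c₁)*(w:ℝ))) * y^s)
      ≤ (1+y*x)^w * (1+y)^(n-w) := by
    have perS : ∀ S ∈ A, (x^((q - c₁)*(w:ℝ))) * y^s
        ≤ ∏ i ∈ S, (y * (if e i = true then x else 1)) := by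
      intro S hS
      have hmem := hS
      rw [hA, Finset.mem_filter, Finset.mem_powersetCard] at hmem
      have hcard : S.card = s := hmem.1.2
      have hprod : ∏ i ∈ S, (y * (if e i = true then x else 1))
          = y^s * x^((S.filter (fun i => e i = true)).card) := by
        rw [Finset.prod_mul_distrib, Finset.prod_const, hcard]
        congr 1
        rw [Finset.prod_ite, Finset.prod_const, Finset.prod_const, one_pow, mul_one]
      rw [hprod]
      have hrle : x^((q - c₁)*(w:ℝ)) ≤ x^(((S.filter (fun i => e i = true)).card : ℕ) : ℝ) := by
        apply Real.rpow_le_rpow_of_exponent_ge hx0 hx1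
        have := hthr S hS
        linarith [this]
      rw [Real.rpow_natCast] at hrle
      calc (x^((q - c₁)*(w:ℝ))) * y^s ≤ x^((S.filter (fun i => e i = true)).card) * y^s :=
            mul_le_mul_of_nonneg_right hrle (by positivity)
        _ = y^s * x^((S.filter (fun i => e i = true)).card) := by ring
    calc (A.card : ℝ) * ((x^((q - c₁)*(w:ℝ))) * y^s)
        = ∑ _S ∈ A, (x^((q - c₁)*(w:ℝ))) * y^s := by rw [Finset.sum_const]; ring
      _ ≤ ∑ S ∈ A, ∏ i ∈ S, (y * (if e i = true then x else 1)) :=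
          Finset.sum_le_sum perS
      _ ≤ ∑ S ∈ U.powerset, ∏ i ∈ S, (y * (if e i = true then x else 1)) := by
          apply Finset.sum_le_sum_of_subset_of_nonneg hsub
          intro S _ _
          apply Finset.prod_nonneg
          intro i _
          have : (0:ℝ) ≤ if e i = true then x else 1 := by
            split <;> linarith
          positivity
      _ = ∏ i ∈ U, (1 + y * (if e i = true then x else 1)) := sum_powerset_prod U _
      _ = (1+y*x)^w * (1+y)^(n-w) := by
          have hfun : (fun i => 1 + y * (if e i = true then x else 1))
              = fun i => (if e i = true then 1 + y*x else 1 + y) := by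
            funext i
            split <;> ring
          rw [hfun, Finset.prod_ite, Finset.prod_const, Finset.prod_const, ← hw]
          congr 2
          have := Finset.card_filter_add_card_filter_not (s := U)
            (p := fun i => e i = true)
          rw [hn, hw]
          omega
  -- Step 2 : binomial lower bound
  have step2 : (1 + y)^n ≤ ((n:ℝ)+1) * (n.choose s) * y^s := by
    rw [hy]; exact binom_lower n s hsn
  -- combine
  have combo : (A.card : ℝ) * ((x^((q - c₁)*(w:ℝ))) * y^s)
      ≤ (1 - q*(c₁/2))^w * (((n:ℝ)+1) * (n.choose s)) * y^s := by
    have hq34 : (0:ℝ) ≤ 1 - q*(c₁/2) := by nlinarith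
    calc (A.card : ℝ) * ((x^((q - c₁)*(w:ℝ))) * y^s)
        ≤ (1+y*x)^w * (1+y)^(n-w) := step1
      _ = (1 - q*(c₁/2))^w * (1+y)^n := by
          rw [hiden, mul_pow, show n = w + (n - w) by omega, pow_add]
          ring_nf
          rw [show w + (n-w) - w = n - w by omega]
      _ ≤ (1 - q*(c₁/2))^w * (((n:ℝ)+1) * (n.choose s) * y^s) := by
          apply mul_le_mul_of_nonneg_left step2 (by positivity)
      _ = (1 - q*(c₁/2))^w * (((n:ℝ)+1) * (n.choose s)) * y^s := by ring
  have cancel : (A.card : ℝ) * (x^((q - c₁)*(w:ℝ)))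
      ≤ (1 - q*(c₁/2))^w * (((n:ℝ)+1) * (n.choose s)) := by
    have hys : (0:ℝ) < y^s := by positivity
    calc (A.card : ℝ) * (x^((q - c₁)*(w:ℝ)))
        = ((A.card : ℝ) * ((x^((q - c₁)*(w:ℝ))) * y^s)) / y^s := by
          field_simp
      _ ≤ ((1 - q*(c₁/2))^w * (((n:ℝ)+1) * (n.choose s)) * y^s) / y^s :=
          (div_le_div_iff_of_pos_right hys).mpr combo
      _ = (1 - q*(c₁/2))^w * (((n:ℝ)+1) * (n.choose s)) := by
          field_simp
  -- finish
  have hxpow : (0:ℝ) < x^((q - c₁)*(w:ℝ)) := Real.rpow_pos_of_pos hx0 _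
  have hpw : (x^(c₁-q))^w = x^((c₁-q)*(w:ℝ)) := by
    rw [← Real.rpow_natCast (x^(c₁-q)) w, ← Real.rpow_mul (le_of_lt hx0)]
  have hmul : x^((q-c₁)*(w:ℝ)) * x^((c₁-q)*(w:ℝ)) = 1 := by
    rw [← Real.rpow_add hx0, show (q-c₁)*(w:ℝ) + (c₁-q)*(w:ℝ) = 0 by ring, Real.rpow_zero]
  have final : (A.card : ℝ) ≤ ((n:ℝ)+1) * (n.choose s) * ((x^(c₁ - q)) * (1 - q*(c₁/2)))^w := by
    have h2 : ((n:ℝ)+1) * (n.choose s) * ((x^(c₁ - q)) * (1 - q*(c₁/2)))^w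
        = (1 - q*(c₁/2))^w * (((n:ℝ)+1) * (n.choose s)) * x^((c₁-q)*(w:ℝ)) := by
      rw [mul_pow, hpw]; ring
    rw [h2]
    calc (A.card : ℝ) = (A.card : ℝ) * (x^((q-c₁)*(w:ℝ)) * x^((c₁-q)*(w:ℝ))) := by
          rw [hmul, mul_one]
      _ = ((A.card : ℝ) * x^((q-c₁)*(w:ℝ))) * x^((c₁-q)*(w:ℝ)) := by ring
      _ ≤ ((1 - q*(c₁/2))^w * (((n:ℝ)+1) * (n.choose s))) * x^((c₁-q)*(w:ℝ)) := by
          apply mul_le_mul_of_nonneg_right cancel (le_of_lt (Real.rpow_pos_of_pos hx0 _))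
  have hbase : (0:ℝ) ≤ (x^(c₁ - q)) * (1 - q*(c₁/2)) := by
    have h1 : (0:ℝ) < x^(c₁-q) := Real.rpow_pos_of_pos hx0 _
    have h2 : (0:ℝ) ≤ 1 - q*(c₁/2) := by
      nlinarith [mul_le_mul hq1 hc (le_of_lt hc0) (by norm_num : (0:ℝ) ≤ 1)]
    exact mul_nonneg h1.le h2
  calc (A.card : ℝ) ≤ ((n:ℝ)+1) * (n.choose s) * ((x^(c₁ - q)) * (1 - q*(c₁/2)))^w := final
    _ ≤ ((n:ℝ)+1) * (n.choose s) * (Real.exp (-(c₁^2/6)))^w := by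
        apply mul_le_mul_of_nonneg_left _ (by positivity)
        apply pow_le_pow_left₀ hbase
        rw [hx]
        exact analytic_core hc0 hc hq0 hq1

-- number of b : Fin m → Bool agreeing with a prescribed pattern on T is ≤ 2^(m - T.card)
lemma fiber_bound {m : ℕ} (T S : Finset (Fin m))
    (F : Finset (Finset (Fin m) × (Fin m → Bool)))
    (hF : ∀ p ∈ F, p.1 = T ∧ T.filter (fun i => p.2 i = true) = S) :
    F.card ≤ 2^(m - T.card) := by
  classical
  have hcard : (Fintype.piFinset (fun i : Fin m =>
      if i ∈ T then ({decide (i ∈ S)} : Finset Bool) else (Finset.univ : Finset Bool))).card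
      = 2^(m - T.card) := by
    rw [Fintype.card_piFinset]
    have hfac : ∀ i : Fin m,
        ((if i ∈ T then ({decide (i ∈ S)} : Finset Bool) else (Finset.univ : Finset Bool)).card)
        = (if i ∈ T then 1 else 2) := by
      intro i
      split
      · rw [Finset.card_singleton]
      · rw [Finset.card_univ, Fintype.card_bool]
    rw [Finset.prod_congr rfl (fun i _ => hfac i)]
    rw [Finset.prod_ite, Finset.prod_const, Finset.prod_const, one_pow, one_mul]
    congr 1
    have h1 : Finset.univ.filter (fun i : Fin m => ¬ i ∈ T) = Tᶜ := by
      ext i; simp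
    rw [h1, Finset.card_compl, Fintype.card_fin]
  rw [← hcard]
  apply Finset.card_le_card_of_injOn (fun p => p.2)
  · intro p hp
    rw [Finset.mem_coe, Fintype.mem_piFinset]
    intro i
    obtain ⟨h1, h2⟩ := hF p hp
    split
    · rename_i hiT
      rw [Finset.mem_singleton]
      have hiff : i ∈ S ↔ (i ∈ T ∧ p.2 i = true) := by
        rw [← h2, Finset.mem_filter]
      cases hb : p.2 i with
      | false =>
        have hns : i ∉ S := fun hs => by
          have hc := (hiff.mp hs).2
          rw [hb] at hc
          exact Bool.false_ne_true hc
        simp [hns, hb]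
      | true =>
        have hs : i ∈ S := hiff.mpr ⟨hiT, hb⟩
        simp [hs, hb]
    · exact Finset.mem_univ _
  · intro p hp p' hp' h
    have e1 := (hF p hp).1
    have e2 := (hF p' hp').1
    exact Prod.ext (e1.trans e2.symm) h

lemma sum_choose_bound {m k : ℕ} (hk : k ≤ m) :
    ∑ U ∈ ((Finset.univ : Finset (Fin m)).powerset.filter (fun U => m - k ≤ U.card)),
      (U.powersetCard (U.card - (m - k))).card ≤ m.choose k * 2^k := by
  classical
  set B := ((Finset.univ : Finset (Fin m)).powerset.filter (fun U => m - k ≤ U.card)) with hB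
  rw [← Finset.card_sigma]
  have h3 : (((Finset.univ : Finset (Fin m)).powersetCard k).sigma
      (fun T => T.powerset)).card = m.choose k * 2^k := by
    rw [Finset.card_sigma]
    rw [Finset.sum_congr rfl (fun T hT => by
      rw [Finset.card_powerset, (Finset.mem_powersetCard.mp hT).2])]
    rw [Finset.sum_const, Finset.card_powersetCard, Finset.card_univ, Fintype.card_fin,
      smul_eq_mul]
  rw [← h3]
  apply Finset.card_le_card_of_injOn (fun p => ⟨(p.1 \ p.2)ᶜ, p.2⟩)
  · rintro ⟨U, S⟩ hp
    rw [Finset.mem_coe, Finset.mem_sigma] at hp ⊢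
    obtain ⟨hU, hS⟩ := hp
    rw [hB, Finset.mem_filter] at hU
    obtain ⟨-, hUcard⟩ := hU
    rw [Finset.mem_powersetCard] at hS
    obtain ⟨hSU, hScard⟩ := hS
    have hsd : (U \ S).card = m - k := by
      rw [Finset.card_sdiff_of_subset hSU, hScard]
      omega
    constructor
    · rw [Finset.mem_powersetCard]
      refine ⟨Finset.subset_univ _, ?_⟩
      rw [Finset.card_compl, Fintype.card_fin, hsd]
      omega
    · rw [Finset.mem_powerset]
      intro i hi
      rw [Finset.mem_compl, Finset.mem_sdiff]
      rintro ⟨_, hc⟩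
      exact hc hi
  · rintro ⟨U, S⟩ hp ⟨U', S'⟩ hp' h
    rw [Finset.mem_coe, Finset.mem_sigma] at hp hp'
    have hSU : S ⊆ U := (Finset.mem_powersetCard.mp hp.2).1
    have hSU' : S' ⊆ U' := (Finset.mem_powersetCard.mp hp'.2).1
    obtain ⟨h1, h2⟩ := Sigma.mk.inj_iff.mp h
    have h2' : S = S' := eq_of_heq h2
    have h1' : U \ S = U' \ S' := by
      have := congrArg (fun X => Xᶜ) h1
      simpa using h1
    have : U = U' := by
      rw [← Finset.sdiff_union_of_subset hSU, ← Finset.sdiff_union_of_subset hSU',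
        h1', h2']
    subst this h2'
    rfl


set_option maxHeartbeats 1000000 in
open Classical in
lemma perU_bound {m k s : ℕ} (α ε c₁ : ℝ) (e : Fin m → Bool) (U : Finset (Fin m))
    (hα0 : 0 < α) (hα1 : α < 1) (hε : 0 < ε)
    (hc₁0 : 0 < c₁) (hc₁half : c₁ ≤ 1/2) (hc₁le : c₁ ≤ ε*(1-α)*α/8)
    (hkm : k < m) (hkαm : (k:ℝ) ≤ α*m) (hk2 : α*m/2 ≤ (k:ℝ))
    (hUcard : U.card = (m-k) + s) (hs4 : k < 4*s)
    (hwit : ε*((m:ℝ)-k) ≤ ((U.filter (fun i => e i = true)).card : ℝ)) :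
    (((U.powersetCard s).filter
        (fun S => relErr e (U \ S) > relErr e S + ε)).card : ℝ)
      ≤ ((m:ℝ)+1) * Real.exp (-(c₁^2*(ε*(1-α))/6*(m:ℝ)))
          * ((U.powersetCard s).card : ℝ) := by
  have hkmle : k ≤ m := le_of_lt hkm
  have hmkR : ((m-k:ℕ):ℝ) = (m:ℝ) - k := by
    push_cast [Nat.cast_sub hkmle]
    ring
  have hmkα : (1-α)*m ≤ (m:ℝ) - k := by linarith
  have hmk0 : (0:ℝ) < (m:ℝ)-k := by
    have : (k:ℝ) < m := by exact_mod_cast hkm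
    linarith
  have hs0 : 0 < s := by omega
  have hsn : s < U.card := by omega
  set n := U.card with hndef
  set w := (U.filter (fun i => e i = true)).card with hwdef
  have hsUR : (0:ℝ) < (s:ℝ) := by exact_mod_cast hs0
  have hn0R : (0:ℝ) < (n:ℝ) := by
    have : 0 < n := lt_trans hs0 hsn
    exact_mod_cast this
  have hnm : (n:ℝ) ≤ m := by
    have h1 : U.card ≤ m := by
      have := Finset.card_le_univ U
      rwa [Fintype.card_fin] at this
    exact_mod_cast h1
  have hwnn : (w:ℝ) ≤ n := by
    have : w ≤ n := Finset.card_filter_le _ _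
    exact_mod_cast this
  have hw0 : (0:ℝ) ≤ w := Nat.cast_nonneg _
  have hs4R : (k:ℝ) < 4*(s:ℝ) := by exact_mod_cast hs4
  have hnval : (n:ℝ) = ((m:ℝ)-k) + s := by
    rw [← hmkR]
    exact_mod_cast hUcard
  have hmR : (0:ℝ) ≤ m := Nat.cast_nonneg _
  have key2 : c₁*(n:ℝ)*w ≤ ε*(s:ℝ)*((m:ℝ)-k) := by
    have hsU8 : α*m/8 ≤ (s:ℝ) := by linarith
    have t1 : ε*(α*m/8) ≤ ε*(s:ℝ) := mul_le_mul_of_nonneg_left hsU8 hε.le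
    have t2 : ε*(α*m/8)*((1-α)*m) ≤ ε*(s:ℝ)*((m:ℝ)-k) := by
      apply mul_le_mul t1 hmkα (mul_nonneg (by linarith) hmR) (by positivity)
    have t0 : c₁*((n:ℝ)*w) ≤ c₁*((m:ℝ)*m) := by
      apply mul_le_mul_of_nonneg_left _ hc₁0.le
      exact mul_le_mul hnm (hwnn.trans hnm) hw0 hmR
    have t3 : c₁*((m:ℝ)*m) ≤ (ε*(1-α)*α/8)*((m:ℝ)*m) := by
      apply mul_le_mul_of_nonneg_right hc₁le (by positivity)
    have t4 : (ε*(1-α)*α/8)*((m:ℝ)*m) = ε*(α*m/8)*((1-α)*m) := by ring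
    nlinarith [t0, t3, t4, t2]
  have hthr : ∀ S ∈ (U.powersetCard s).filter
      (fun S => relErr e (U \ S) > relErr e S + ε),
      ((S.filter (fun i => e i = true)).card : ℝ)
        ≤ ((s:ℝ)/(U.card:ℝ) - c₁) * ((U.filter (fun i => e i = true)).card) := by
    intro S hS
    rw [Finset.mem_filter, Finset.mem_powersetCard] at hS
    obtain ⟨⟨hSU, hScard⟩, hSbad⟩ := hS
    set v := (S.filter (fun i => e i = true)).card with hvdef
    set u := ((U \ S).filter (fun i => e i = true)).card with hudef
    have hUsS : (U \ S).card = m - k := by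
      rw [Finset.card_sdiff_of_subset hSU, hScard]
      omega
    have hw_split : w = v + u := by
      rw [hwdef]
      conv_lhs => rw [← Finset.union_sdiff_of_subset hSU]
      rw [Finset.filter_union]
      exact Finset.card_union_of_disjoint
        (Finset.disjoint_filter_filter Finset.disjoint_sdiff)
    have hrelS : relErr e S = (v:ℝ)/(s:ℝ) := by
      unfold relErr
      rw [hScard]
    have hrelU : relErr e (U \ S) = (u:ℝ)/((m:ℝ)-k) := by
      unfold relErr
      rw [hUsS, hmkR]
    have hbad' : (v:ℝ)/(s:ℝ) + ε < (u:ℝ)/((m:ℝ)-k) := by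
      rw [← hrelS, ← hrelU]
      exact hSbad
    have key1 : (v:ℝ)*((m:ℝ)-k) + ε*(s:ℝ)*((m:ℝ)-k) < (u:ℝ)*(s:ℝ) := by
      have hmul := mul_lt_mul_of_pos_right hbad' (mul_pos hsUR hmk0)
      have hL : ((v:ℝ)/(s:ℝ) + ε)*((s:ℝ)*((m:ℝ)-k))
          = (v:ℝ)*((m:ℝ)-k) + ε*(s:ℝ)*((m:ℝ)-k) := by
        field_simp
      have hR : ((u:ℝ)/((m:ℝ)-k))*((s:ℝ)*((m:ℝ)-k)) = (u:ℝ)*(s:ℝ) := by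
        field_simp
      rw [hL, hR] at hmul
      exact hmul
    have hwr : (w:ℝ) = (v:ℝ) + (u:ℝ) := by exact_mod_cast hw_split
    have hexp : (((s:ℝ)/(n:ℝ)) - c₁)*(w:ℝ)*(n:ℝ) = (s:ℝ)*(w:ℝ) - c₁*(n:ℝ)*(w:ℝ) := by
      field_simp
    have hvw : (v:ℝ)*(n:ℝ) ≤ (((s:ℝ)/(n:ℝ)) - c₁)*(w:ℝ)*(n:ℝ) := by
      rw [hexp]
      nlinarith [key1, key2]
    exact le_of_mul_le_mul_right hvw hn0R
  have hNle := hyper_tail e U s hs0 hsn c₁ hc₁0 hc₁half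
    (fun S => relErr e (U \ S) > relErr e S + ε) hthr
  have hEw : (Real.exp (-(c₁^2/6)))^w ≤ Real.exp (-(c₁^2*(ε*(1-α))/6*(m:ℝ))) := by
    rw [← Real.exp_nat_mul]
    apply Real.exp_le_exp.mpr
    have h1 : ε*((1-α)*(m:ℝ)) ≤ (w:ℝ) := by nlinarith [hwit, hmkα]
    have h2 : 0 ≤ (c₁^2) * ((w:ℝ) - ε*((1-α)*(m:ℝ))) :=
      mul_nonneg (sq_nonneg _) (by linarith)
    nlinarith [h2]
  have hn1m : (n:ℝ)+1 ≤ (m:ℝ)+1 := by linarith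
  have hchoose0 : (0:ℝ) ≤ (n.choose s : ℝ) := Nat.cast_nonneg _
  calc (((U.powersetCard s).filter
        (fun S => relErr e (U \ S) > relErr e S + ε)).card : ℝ)
      ≤ ((n:ℝ)+1) * (n.choose s) * (Real.exp (-(c₁^2/6)))^w := hNle
    _ ≤ ((m:ℝ)+1) * (n.choose s) * (Real.exp (-(c₁^2/6)))^w := by
        apply mul_le_mul_of_nonneg_right _ (by positivity)
        exact mul_le_mul_of_nonneg_right hn1m hchoose0
    _ ≤ ((m:ℝ)+1) * (n.choose s) * Real.exp (-(c₁^2*(ε*(1-α))/6*(m:ℝ))) := by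
        apply mul_le_mul_of_nonneg_left hEw (by positivity)
    _ = ((m:ℝ)+1) * Real.exp (-(c₁^2*(ε*(1-α))/6*(m:ℝ))) * ((U.powersetCard s).card : ℝ) := by
        rw [Finset.card_powersetCard]
        ring


open Classical in
lemma witness_w_large {m k : ℕ} (ε : ℝ) (hε : 0 < ε) (e : Fin m → Bool)
    (T W U : Finset (Fin m)) (hTc : Tᶜ.card = m - k) (hkm : k < m)
    (hU : Tᶜ ∪ W = U) (hbad : relErr e Tᶜ > relErr e W + ε) :
    ε*((m:ℝ)-k) ≤ ((U.filter (fun i => e i = true)).card : ℝ) := by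
  have hmkR : ((m-k:ℕ):ℝ) = (m:ℝ) - k := by
    push_cast [Nat.cast_sub (le_of_lt hkm)]
    ring
  have hmk0 : (0:ℝ) < (m:ℝ)-k := by
    have : (k:ℝ) < m := by exact_mod_cast hkm
    linarith
  have hrel0 : 0 ≤ relErr e W := by unfold relErr; positivity
  have hux : relErr e Tᶜ = (((Tᶜ.filter (fun i => e i = true)).card : ℝ))/((m:ℝ)-k) := by
    unfold relErr
    rw [hTc, hmkR]
  have hsub2 : (Tᶜ.filter (fun i => e i = true)).card
      ≤ (U.filter (fun i => e i = true)).card := by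
    apply Finset.card_le_card
    apply Finset.filter_subset_filter
    rw [← hU]
    exact Finset.subset_union_left
  have hgt : ε < (((Tᶜ.filter (fun i => e i = true)).card : ℝ))/((m:ℝ)-k) := by
    rw [← hux]
    linarith
  rw [lt_div_iff₀ hmk0] at hgt
  calc ε*((m:ℝ)-k) ≤ ((Tᶜ.filter (fun i => e i = true)).card : ℝ) := le_of_lt hgt
    _ ≤ ((U.filter (fun i => e i = true)).card : ℝ) := by exact_mod_cast hsub2

lemma final_arith (α : ℝ) (hα0 : 0 < α) (hα1 : α < 1)
    (β₁ β₂ γ : ℝ) (hβ₁ : β₁ = α/2*Real.log (384/337)) (hβ₂0 : 0 < β₂)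
    (hγ : γ = min β₁ (β₂/2)) (m k : ℕ)
    (hk2 : α*(m:ℝ)/2 ≤ k) (hkm : k ≤ m)
    (hm32 : 32/β₂^2 ≤ (m:ℝ)) (hmγ : 2*Real.log 2/γ ≤ (m:ℝ)) (hm1 : (1:ℝ) ≤ m) :
    (337/192:ℝ)^k*2^(m-k) + ((m:ℝ)+1)*Real.exp (-(β₂*(m:ℝ)))*(2^k*2^(m-k))
      ≤ (2:ℝ)^(-(γ/(2*Real.log 2)*(m:ℝ))) * 2^m := by
  have hL2 : (0:ℝ) < Real.log 2 := Real.log_pos one_lt_two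
  have hlog337 : 0 < Real.log (384/337) := Real.log_pos (by norm_num)
  have hβ₁0 : 0 < β₁ := by rw [hβ₁]; positivity
  have hγ0 : 0 < γ := by rw [hγ]; exact lt_min hβ₁0 (by positivity)
  have h2m : (2:ℝ)^m = 2^(m-k)*2^k := by
    rw [← pow_add]
    congr 1
    omega
  have term1 : (337/192:ℝ)^k*2^(m-k) ≤ Real.exp (-(β₁*m)) * 2^m := by
    have hsplit : (337/192:ℝ)^k*2^(m-k) = (337/384:ℝ)^k * 2^m := by
      rw [h2m, show (337/384:ℝ) = (337/192)*(1/2) by norm_num, mul_pow]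
      have : ((1:ℝ)/2)^k * 2^k = 1 := by
        rw [← mul_pow]
        norm_num
      calc (337/192:ℝ)^k*2^(m-k) = (337/192:ℝ)^k * (((1:ℝ)/2)^k * 2^k) * 2^(m-k) := by
            rw [this, mul_one]
        _ = (337/192:ℝ)^k * ((1:ℝ)/2)^k * (2^(m-k)*2^k) := by ring
    rw [hsplit]
    apply mul_le_mul_of_nonneg_right _ (by positivity)
    have hpos : (0:ℝ) < (337/384:ℝ)^k := by positivity
    rw [← Real.exp_log hpos, Real.log_pow]
    apply Real.exp_le_exp.mpr
    have hloginv : Real.log (337/384:ℝ) = - Real.log (384/337) := by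
      rw [show (337/384:ℝ) = (384/337)⁻¹ by norm_num, Real.log_inv]
    rw [hloginv, hβ₁]
    have := mul_le_mul_of_nonneg_right hk2 hlog337.le
    nlinarith [this]
  have term2 : ((m:ℝ)+1)*Real.exp (-(β₂*(m:ℝ)))*(2^k*2^(m-k))
      ≤ Real.exp (-(β₂*(m:ℝ)/2)) * 2^m := by
    have hm1' : ((m:ℝ)+1) ≤ Real.exp (β₂*(m:ℝ)/2) := by
      have hx0 : (0:ℝ) ≤ β₂*(m:ℝ)/2 := by positivity
      have h1 : β₂*(m:ℝ)/2/2 + 1 ≤ Real.exp (β₂*(m:ℝ)/2/2) := Real.add_one_le_exp _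
      have h2 : (β₂*(m:ℝ)/2/2)^2 ≤ Real.exp (β₂*(m:ℝ)/2/2)^2 := by
        apply pow_le_pow_left₀ (by positivity) (by linarith)
      have h3 : Real.exp (β₂*(m:ℝ)/2/2)^2 = Real.exp (β₂*(m:ℝ)/2) := by
        rw [sq, ← Real.exp_add]
        congr 1
        ring
      have h4 : ((m:ℝ)+1) ≤ (β₂*(m:ℝ)/2/2)^2 := by
        have hβm : 32 ≤ β₂^2*(m:ℝ) := by
          rw [div_le_iff₀ (by positivity)] at hm32
          linarith
        have hmsq : (β₂*(m:ℝ)/2/2)^2 = β₂^2*(m:ℝ)*(m:ℝ)/16 := by ring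
        rw [hmsq]
        nlinarith [hβm, hm1]
      linarith [h4, h2, h3.le, h3.ge]
    calc ((m:ℝ)+1)*Real.exp (-(β₂*(m:ℝ)))*(2^k*2^(m-k))
        ≤ Real.exp (β₂*(m:ℝ)/2)*Real.exp (-(β₂*(m:ℝ)))*(2^k*2^(m-k)) := by
          apply mul_le_mul_of_nonneg_right _ (by positivity)
          exact mul_le_mul_of_nonneg_right hm1' (Real.exp_pos _).le
      _ = Real.exp (-(β₂*(m:ℝ)/2)) * 2^m := by
          rw [← Real.exp_add, h2m]
          ring_nf
  have hsum : (337/192:ℝ)^k*2^(m-k) + ((m:ℝ)+1)*Real.exp (-(β₂*(m:ℝ)))*(2^k*2^(m-k))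
      ≤ (Real.exp (-(γ*m)) + Real.exp (-(γ*m))) * 2^m := by
    have hm0 : (0:ℝ) ≤ m := by linarith
    have e1 : Real.exp (-(β₁*m)) ≤ Real.exp (-(γ*m)) := by
      apply Real.exp_le_exp.mpr
      have h := mul_le_mul_of_nonneg_right
        (show γ ≤ β₁ by rw [hγ]; exact min_le_left _ _) hm0
      linarith
    have e2 : Real.exp (-(β₂*(m:ℝ)/2)) ≤ Real.exp (-(γ*m)) := by
      apply Real.exp_le_exp.mpr
      have h := mul_le_mul_of_nonneg_right
        (show γ ≤ β₂/2 by rw [hγ]; exact min_le_right _ _) hm0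
      linarith
    have p2m : (0:ℝ) ≤ 2^m := by positivity
    have f1 := mul_le_mul_of_nonneg_right e1 p2m
    have f2 := mul_le_mul_of_nonneg_right e2 p2m
    have hadd : Real.exp (-(γ*↑m)) * 2^m + Real.exp (-(γ*↑m)) * 2^m
        = (Real.exp (-(γ*m)) + Real.exp (-(γ*m))) * 2^m := by ring
    linarith [term1, term2, f1, f2]
  calc (337/192:ℝ)^k*2^(m-k) + ((m:ℝ)+1)*Real.exp (-(β₂*(m:ℝ)))*(2^k*2^(m-k))
      ≤ (Real.exp (-(γ*m)) + Real.exp (-(γ*m))) * 2^m := hsum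
    _ ≤ (2:ℝ)^(-(γ/(2*Real.log 2)*(m:ℝ))) * 2^m := by
        apply mul_le_mul_of_nonneg_right _ (by positivity)
        rw [Real.rpow_def_of_pos (by norm_num : (0:ℝ) < 2)]
        have hexp2 : Real.exp (-(γ*m)) + Real.exp (-(γ*m))
            = Real.exp (Real.log 2 + -(γ*m)) := by
          rw [Real.exp_add, Real.exp_log (by norm_num : (0:ℝ) < 2)]
          ring
        rw [hexp2]
        apply Real.exp_le_exp.mpr
        have harg : Real.log 2 * -(γ/(2*Real.log 2)*(m:ℝ)) = -(γ*m/2) := by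
          field_simp
        rw [harg]
        have : 2*Real.log 2 ≤ γ*m := by
          rw [div_le_iff₀ hγ0] at hmγ
          linarith
        linarith
set_option maxHeartbeats 2000000 in
open Classical in
theorem sampling_bound (α ε : ℝ) (hα0 : 0 < α) (hα1 : α < 1) (hε : 0 < ε) :
    ∃ c : ℝ, 0 < c ∧ ∃ m₀ : ℕ, ∀ m : ℕ, m₀ ≤ m → ∀ e : Fin m → Bool,
      (((((Finset.univ : Finset (Fin m)).powersetCard ⌊α * m⌋₊ ×ˢ
            (Finset.univ : Finset (Fin m → Bool))).filter
          (fun Tb : Finset (Fin m) × (Fin m → Bool) =>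
            relErr e Tb.1ᶜ >
              relErr e (Tb.1.filter (fun i => Tb.2 i = true)) + ε)).card : ℝ) /
        ((((Finset.univ : Finset (Fin m)).powersetCard ⌊α * m⌋₊).card : ℝ) * 2 ^ m))
      ≤ (2 : ℝ) ^ (-(c * (m : ℝ))) := by
  -- constants
  set c₁ : ℝ := min (ε*(1-α)*α/8) (1/2) with hc₁def
  have hc₁0 : 0 < c₁ := by
    apply lt_min _ (by norm_num)
    have : 0 < 1 - α := by linarith
    positivity
  have hc₁half : c₁ ≤ 1/2 := min_le_right _ _
  have hc₁le : c₁ ≤ ε*(1-α)*α/8 := min_le_left _ _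
  set β₂ : ℝ := c₁^2*(ε*(1-α))/6 with hβ₂def
  have hβ₂0 : 0 < β₂ := by
    have h1 : 0 < 1 - α := by linarith
    positivity
  set β₁ : ℝ := (α/2) * Real.log (384/337) with hβ₁def
  have hlog337 : 0 < Real.log (384/337) := Real.log_pos (by norm_num)
  have hβ₁0 : 0 < β₁ := by positivity
  set γ : ℝ := min β₁ (β₂/2) with hγdef
  have hγ0 : 0 < γ := lt_min hβ₁0 (by positivity)
  refine ⟨γ/(2*Real.log 2), by positivity, ?_⟩
  refine ⟨⌈2/α⌉₊ + ⌈32/β₂^2⌉₊ + ⌈2*Real.log 2/γ⌉₊ + 1, ?_⟩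
  intro m hm e
  set k := ⌊α * (m:ℕ)⌋₊ with hkdef
  -- basic numeric facts about m and k
  have hm1 : 1 ≤ m := by omega
  have hmR : (1:ℝ) ≤ m := by exact_mod_cast hm1
  have hm2α : 2/α ≤ (m:ℝ) := by
    have : (⌈2/α⌉₊ : ℝ) ≤ m := by exact_mod_cast le_trans (by omega) hm
    exact le_trans (Nat.le_ceil _) this
  have hαm2 : 2 ≤ α * m := by
    rw [div_le_iff₀ hα0] at hm2α
    linarith
  have hkαm : (k:ℝ) ≤ α * m := Nat.floor_le (by positivity)
  have hαmk : α * m - 1 ≤ (k:ℝ) := by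
    have := Nat.lt_floor_add_one (α * (m:ℕ))
    push_cast at this ⊢
    linarith
  have hk2 : α*m/2 ≤ (k:ℝ) := by linarith
  have hkm : k < m := by
    have : (k:ℝ) < m := lt_of_le_of_lt hkαm (by nlinarith)
    exact_mod_cast this
  have hkmle : k ≤ m := le_of_lt hkm
  have hmk1 : 1 ≤ m - k := by omega
  have hmkR : ((m-k:ℕ):ℝ) = (m:ℝ) - k := by
    push_cast [Nat.cast_sub hkmle]; ring
  have hmkα : (1-α)*m ≤ (m:ℝ) - k := by nlinarith
  set Bad := ((Finset.univ.powersetCard k ×ˢ (Finset.univ : Finset (Fin m → Bool))).filter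
      (fun Tb => relErr e Tb.1ᶜ > relErr e (Tb.1.filter (fun i => Tb.2 i = true)) + ε)) with hBad
  set t : Finset (Finset (Fin m) × Finset (Fin m)) :=
      (Finset.univ.powersetCard k) ×ˢ (Finset.univ : Finset (Finset (Fin m))) with ht
  set A := t.filter (fun p => p.2 ⊆ p.1 ∧ relErr e p.1ᶜ > relErr e p.2 + ε) with hA
  have hstep0 : Bad.card ≤ A.card * 2^(m-k) := by
    have hmap : ∀ x ∈ Bad, (x.1, x.1.filter (fun i => x.2 i = true)) ∈ t := by
      intro x hx
      rw [hBad, Finset.mem_filter, Finset.mem_product] at hx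
      rw [ht, Finset.mem_product]
      exact ⟨hx.1.1, Finset.mem_univ _⟩
    rw [Finset.card_eq_sum_card_fiberwise hmap]
    have hper : ∀ p ∈ t,
        (Bad.filter (fun x => (x.1, x.1.filter (fun i => x.2 i = true)) = p)).card
        ≤ if p ∈ A then 2^(m-k) else 0 := by
      intro p hp
      by_cases hne : (Bad.filter
          (fun x => (x.1, x.1.filter (fun i => x.2 i = true)) = p)).Nonempty
      · obtain ⟨x, hx⟩ := hne
        rw [Finset.mem_filter] at hx
        obtain ⟨hxBad, hxeq⟩ := hx
        have hx1 : x.1 = p.1 := congrArg Prod.fst hxeq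
        have hx2 : x.1.filter (fun i => x.2 i = true) = p.2 := congrArg Prod.snd hxeq
        rw [hBad, Finset.mem_filter, Finset.mem_product] at hxBad
        have hpA : p ∈ A := by
          rw [hA, Finset.mem_filter]
          refine ⟨hp, ?_, ?_⟩
          · rw [← hx1, ← hx2]; exact Finset.filter_subset _ _
          · rw [← hx1, ← hx2]; exact hxBad.2
        rw [if_pos hpA]
        have hp1k : p.1.card = k := by
          rw [ht, Finset.mem_product] at hp
          exact (Finset.mem_powersetCard.mp hp.1).2
        rw [← hp1k]
        apply fiber_bound p.1 p.2
        intro q hq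
        rw [Finset.mem_filter] at hq
        have hq1 : q.1 = p.1 := congrArg Prod.fst hq.2
        have hq2 : q.1.filter (fun i => q.2 i = true) = p.2 := congrArg Prod.snd hq.2
        exact ⟨hq1, by rw [← hq1]; exact hq2⟩
      · rw [Finset.not_nonempty_iff_eq_empty] at hne
        rw [hne, Finset.card_empty]
        split <;> norm_num
    calc ∑ p ∈ t, (Bad.filter
          (fun x => (x.1, x.1.filter (fun i => x.2 i = true)) = p)).card
        ≤ ∑ p ∈ t, (if p ∈ A then 2^(m-k) else 0) := Finset.sum_le_sum hper
      _ = ∑ p ∈ t.filter (fun p => p ∈ A), 2^(m-k) := (Finset.sum_filter _ _).symm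
      _ = A.card * 2^(m-k) := by
          rw [Finset.sum_const, smul_eq_mul]
          congr 2
          ext p
          rw [Finset.mem_filter]
          constructor
          · exact fun h => h.2
          · intro h
            exact ⟨Finset.filter_subset _ _ h, h⟩
  set A₁ := A.filter (fun p => 4*p.2.card ≤ k) with hA₁
  set A₂ := A.filter (fun p => ¬(4*p.2.card ≤ k)) with hA₂
  have hsplit : A₁.card + A₂.card = A.card :=
    Finset.card_filter_add_card_filter_not _
  have hchoose : ((Finset.univ : Finset (Fin m)).powersetCard k).card = m.choose k := by
    rw [Finset.card_powersetCard, Finset.card_univ, Fintype.card_fin]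
  have hA₁bound : (A₁.card : ℝ) ≤ (m.choose k) * (337/192)^k := by
    have hmap : ∀ p ∈ A₁, p.1 ∈ (Finset.univ : Finset (Fin m)).powersetCard k := by
      intro p hp
      rw [hA₁, Finset.mem_filter] at hp
      have := hp.1
      rw [hA, Finset.mem_filter, ht, Finset.mem_product] at this
      exact this.1.1
    rw [Finset.card_eq_sum_card_fiberwise hmap]
    push_cast
    have hper : ∀ T ∈ (Finset.univ : Finset (Fin m)).powersetCard k,
        ((A₁.filter (fun p => p.1 = T)).card : ℝ) ≤ (337/192)^k := by
      intro T hT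
      have hTk : T.card = k := (Finset.mem_powersetCard.mp hT).2
      have hnat : (A₁.filter (fun p => p.1 = T)).card
          ≤ (T.powerset.filter (fun S => 4 * S.card ≤ k)).card := by
        apply Finset.card_le_card_of_injOn (fun p => p.2)
        · intro p hp
          rw [Finset.mem_coe, Finset.mem_filter] at hp
          obtain ⟨hp1, hp2⟩ := hp
          rw [hA₁, Finset.mem_filter] at hp1
          obtain ⟨hpA, hp4⟩ := hp1
          rw [hA, Finset.mem_filter] at hpA
          rw [Finset.mem_coe, Finset.mem_filter, Finset.mem_powerset]
          exact ⟨hp2 ▸ hpA.2.1, hp4⟩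
        · intro p hp p' hp' h
          rw [Finset.mem_coe, Finset.mem_filter] at hp hp'
          exact Prod.ext (hp.2.trans hp'.2.symm) h
      calc ((A₁.filter (fun p => p.1 = T)).card : ℝ)
          ≤ ((T.powerset.filter (fun S => 4 * S.card ≤ k)).card : ℝ) := by
            exact_mod_cast hnat
        _ ≤ (337/192)^k := small_tail T k hTk
    calc ∑ T ∈ (Finset.univ : Finset (Fin m)).powersetCard k,
          ((A₁.filter (fun p => p.1 = T)).card : ℝ)
        ≤ ∑ _T ∈ (Finset.univ : Finset (Fin m)).powersetCard k, (337/192:ℝ)^k :=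
          Finset.sum_le_sum hper
      _ = (m.choose k) * (337/192)^k := by
          rw [Finset.sum_const, hchoose, nsmul_eq_mul]
  set E : ℝ := Real.exp (-(c₁^2*(ε*(1-α))/6*(m:ℝ))) with hEdef
  have hE0 : 0 < E := Real.exp_pos _
  have hEeq : E = Real.exp (-(β₂*(m:ℝ))) := by rw [hEdef, hβ₂def]
  have hA₂bound : (A₂.card : ℝ) ≤ ((m:ℝ)+1) * E * ((m.choose k) * 2^k) := by
    have hmap : ∀ p ∈ A₂, p.1ᶜ ∪ p.2 ∈ (Finset.univ : Finset (Finset (Fin m))) :=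
      fun p _ => Finset.mem_univ _
    rw [Finset.card_eq_sum_card_fiberwise hmap]
    push_cast
    have hper : ∀ U ∈ (Finset.univ : Finset (Finset (Fin m))),
        ((A₂.filter (fun p => p.1ᶜ ∪ p.2 = U)).card : ℝ)
        ≤ (if m - k ≤ U.card then
            ((m:ℝ)+1) * E * ((U.powersetCard (U.card - (m-k))).card : ℝ) else 0) := by
      intro U _
      by_cases hne : (A₂.filter (fun p => p.1ᶜ ∪ p.2 = U)).Nonempty
      swap
      · rw [Finset.not_nonempty_iff_eq_empty] at hne
        rw [hne, Finset.card_empty]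
        push_cast
        split
        · positivity
        · exact le_refl 0
      obtain ⟨x, hx⟩ := hne
      rw [Finset.mem_filter] at hx
      obtain ⟨hxA₂, hxU⟩ := hx
      have hxA₂' := hxA₂
      rw [hA₂, Finset.mem_filter] at hxA₂'
      obtain ⟨hxA, hx4⟩ := hxA₂'
      rw [hA, Finset.mem_filter] at hxA
      obtain ⟨hxt, hxsub, hxbad⟩ := hxA
      rw [ht, Finset.mem_product] at hxt
      have hx1k : x.1.card = k := (Finset.mem_powersetCard.mp hxt.1).2
      have hx1c : x.1ᶜ.card = m - k := by
        rw [Finset.card_compl, Fintype.card_fin, hx1k]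
      have hfib : ∀ p : Finset (Fin m) × Finset (Fin m), p ∈ A₂ → p.1ᶜ ∪ p.2 = U →
          p.2 ⊆ U ∧ U.card = (m-k) + p.2.card ∧ U \ p.2 = p.1ᶜ ∧ ¬(4*p.2.card ≤ k)
            ∧ relErr e p.1ᶜ > relErr e p.2 + ε := by
        intro p hpA₂ hpU
        rw [hA₂, Finset.mem_filter] at hpA₂
        obtain ⟨hpA, hp4⟩ := hpA₂
        rw [hA, Finset.mem_filter] at hpA
        obtain ⟨hpt, hpsub, hpbad⟩ := hpA
        rw [ht, Finset.mem_product] at hpt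
        have hp1k : p.1.card = k := (Finset.mem_powersetCard.mp hpt.1).2
        have hdisj : Disjoint p.1ᶜ p.2 := by
          rw [Finset.disjoint_left]
          intro i hi hi2
          rw [Finset.mem_compl] at hi
          exact hi (hpsub hi2)
        refine ⟨?_, ?_, ?_, hp4, hpbad⟩
        · rw [← hpU]; exact Finset.subset_union_right
        · rw [← hpU, Finset.card_union_of_disjoint hdisj, Finset.card_compl,
            Fintype.card_fin, hp1k]
        · rw [← hpU, Finset.union_sdiff_cancel_right hdisj]
      obtain ⟨hxsubU, hxcard, hxsd, hx4', hxbad'⟩ := hfib x hxA₂ hxU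
      have hUk : m - k ≤ U.card := by omega
      rw [if_pos hUk]
      set sU := U.card - (m-k) with hsUdef
      have hsx : sU = x.2.card := by omega
      have hinj : (A₂.filter (fun p => p.1ᶜ ∪ p.2 = U)).card
          ≤ ((U.powersetCard sU).filter
              (fun S => relErr e (U \ S) > relErr e S + ε)).card := by
        apply Finset.card_le_card_of_injOn (fun p => p.2)
        · intro p hp
          rw [Finset.mem_coe, Finset.mem_filter] at hp
          obtain ⟨hpA₂, hpU⟩ := hp
          obtain ⟨h1, h2, h3, h4, h5⟩ := hfib p hpA₂ hpU
          beta_reduce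
          rw [Finset.mem_coe, Finset.mem_filter, Finset.mem_powersetCard]
          refine ⟨⟨h1, by omega⟩, ?_⟩
          rw [h3]
          exact h5
        · intro p hp p' hp' h
          rw [Finset.mem_coe, Finset.mem_filter] at hp hp'
          obtain ⟨hpA₂, hpU⟩ := hp
          obtain ⟨hpA₂', hpU'⟩ := hp'
          obtain ⟨-, -, h3, -, -⟩ := hfib p hpA₂ hpU
          obtain ⟨-, -, h3', -, -⟩ := hfib p' hpA₂' hpU'
          have h' : p.2 = p'.2 := h
          have hc : p.1ᶜ = p'.1ᶜ := by
            rw [← h3, ← h3', h']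
          have hfst : p.1 = p'.1 := by
            rw [← compl_compl p.1, hc, compl_compl]
          exact Prod.ext hfst h'
      have hwit := witness_w_large ε hε e x.1 x.2 U hx1c hkm hxU hxbad'
      have hUcard' : U.card = (m-k) + sU := by omega
      have hs4 : k < 4*sU := by omega
      have hperU := perU_bound α ε c₁ e U hα0 hα1 hε hc₁0 hc₁half hc₁le hkm hkαm hk2
        hUcard' hs4 hwit
      rw [hEdef]
      calc ((A₂.filter (fun p => p.1ᶜ ∪ p.2 = U)).card : ℝ)
          ≤ (((U.powersetCard sU).filter
              (fun S => relErr e (U \ S) > relErr e S + ε)).card : ℝ) := by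
            exact_mod_cast hinj
        _ ≤ ((m:ℝ)+1) * Real.exp (-(c₁^2*(ε*(1-α))/6*(m:ℝ)))
              * ((U.powersetCard sU).card : ℝ) := hperU
    calc ∑ U ∈ (Finset.univ : Finset (Finset (Fin m))),
          ((A₂.filter (fun p => p.1ᶜ ∪ p.2 = U)).card : ℝ)
        ≤ ∑ U ∈ (Finset.univ : Finset (Finset (Fin m))),
            (if m - k ≤ U.card then
              ((m:ℝ)+1) * E * ((U.powersetCard (U.card - (m-k))).card : ℝ) else 0) :=
          Finset.sum_le_sum hper
      _ = ∑ U ∈ (Finset.univ : Finset (Finset (Fin m))).filter (fun U => m - k ≤ U.card),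
            ((m:ℝ)+1) * E * ((U.powersetCard (U.card - (m-k))).card : ℝ) :=
          (Finset.sum_filter _ _).symm
      _ = ((m:ℝ)+1) * E * ∑ U ∈ (Finset.univ : Finset (Finset (Fin m))).filter
            (fun U => m - k ≤ U.card), ((U.powersetCard (U.card - (m-k))).card : ℝ) := by
          rw [Finset.mul_sum]
      _ ≤ ((m:ℝ)+1) * E * ((m.choose k) * 2^k) := by
          apply mul_le_mul_of_nonneg_left _ (by positivity)
          have hnat := sum_choose_bound (m := m) (k := k) hkmle
          rw [← Finset.powerset_univ] at *
          exact_mod_cast hnat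
  -- final assembly
  have hAbound : (A.card:ℝ) ≤ (m.choose k)*(337/192)^k + ((m:ℝ)+1)*E*((m.choose k)*2^k) := by
    have hcast : (A.card:ℝ) = (A₁.card:ℝ) + (A₂.card:ℝ) := by exact_mod_cast hsplit.symm
    rw [hcast]
    exact add_le_add hA₁bound hA₂bound
  have hBadR : (Bad.card:ℝ)
      ≤ ((m.choose k)*(337/192)^k + ((m:ℝ)+1)*E*((m.choose k)*2^k)) * 2^(m-k) := by
    calc (Bad.card:ℝ) ≤ (A.card:ℝ)*2^(m-k) := by exact_mod_cast hstep0
      _ ≤ _ := mul_le_mul_of_nonneg_right hAbound (by positivity)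
  have hcp : (0:ℝ) < (m.choose k : ℝ) := by exact_mod_cast Nat.choose_pos hkmle
  have hD0 : (0:ℝ) < ((m.choose k):ℝ) * 2^m := by positivity
  rw [hchoose, div_le_iff₀ hD0]
  have hm32 : 32/β₂^2 ≤ (m:ℝ) := by
    have h1 : (⌈32/β₂^2⌉₊ : ℝ) ≤ m := by exact_mod_cast le_trans (by omega) hm
    exact le_trans (Nat.le_ceil _) h1
  have hmγ : 2*Real.log 2/γ ≤ (m:ℝ) := by
    have h1 : (⌈2*Real.log 2/γ⌉₊ : ℝ) ≤ m := by exact_mod_cast le_trans (by omega) hm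
    exact le_trans (Nat.le_ceil _) h1
  calc (Bad.card:ℝ)
      ≤ ((m.choose k)*(337/192)^k + ((m:ℝ)+1)*E*((m.choose k)*2^k)) * 2^(m-k) := hBadR
    _ = (m.choose k) * ((337/192:ℝ)^k*2^(m-k) + ((m:ℝ)+1)*E*(2^k*2^(m-k))) := by ring
    _ ≤ (m.choose k) * ((2:ℝ)^(-(γ/(2*Real.log 2)*(m:ℝ))) * 2^m) := by
        apply mul_le_mul_of_nonneg_left _ hcp.le
        rw [hEeq]
        exact final_arith α hα0 hα1 β₁ β₂ γ hβ₁def hβ₂0 hγdef m k hk2 hkmle hm32 hmγ hmR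
    _ = (2:ℝ)^(-(γ/(2*Real.log 2)*(m:ℝ))) * ((m.choose k) * 2^m) := by ring
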